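/- Let 0 < q < 1. For real x ≥ 0, the second derivative of x ↦ log Γ(x+1;q) is nonnegative, where Γ(z+1;q) := (1-q)^{-z} ∏_{n=1}^{∞} (1-q^n)/(1-q^{z+n}). -/

import Mathlib

open Filter Topology

/-- Real q-gamma function `Γ(x+1; q) = (1-q)^{-x} ∏_{n≥1} (1-q^n)/(1-q^{x+n})`. -/
noncomputable def qGammaR (q : ℝ) (x : ℝ) : ℝ :=
  (1 - q) ^ (-x) * ∏' n : ℕ, (1 - q ^ ((n : ℝ) + 1)) / (1 - q ^ (x + n + 1))

noncomputable def gg (q : ℝ) (n : ℕ) (t : ℝ) : ℝ :=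
  Real.log (1 - q ^ ((n : ℝ) + 1)) - Real.log (1 - q ^ (t + n + 1))

noncomputable def gg1 (q : ℝ) (n : ℕ) (t : ℝ) : ℝ :=
  Real.log q * q ^ (t + n + 1) / (1 - q ^ (t + n + 1))

noncomputable def gg2 (q : ℝ) (n : ℕ) (t : ℝ) : ℝ :=
  Real.log q ^ 2 * q ^ (t + n + 1) / (1 - q ^ (t + n + 1)) ^ 2

section aux

variable {q : ℝ}

lemma neglog_le {u ε : ℝ} (hu : 0 < u) (hε : 0 < ε) (h : ε ≤ 1 - u) :
    -Real.log (1 - u) ≤ u / ε := by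
  have h1 : 0 < 1 - u := lt_of_lt_of_le hε h
  rw [← Real.log_inv]
  have h2 := Real.log_le_sub_one_of_pos (inv_pos.2 h1)
  have h3 : (1 - u)⁻¹ - 1 = u / (1 - u) := by field_simp; ring
  have h4 : u / (1 - u) ≤ u / ε := by gcongr
  linarith

lemma sumgeo (hq : 0 < q) (hq1 : q < 1) : Summable (fun n : ℕ => q ^ ((n : ℝ) + 1)) := by
  have : (fun n : ℕ => q ^ ((n : ℝ) + 1)) = fun n : ℕ => q ^ n * q := by
    funext n
    rw [Real.rpow_add hq, Real.rpow_natCast, Real.rpow_one]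
  rw [this]
  exact (summable_geometric_of_lt_one hq.le hq1).mul_right q

lemma hderiv_rpow (hq : 0 < q) (hq1 : q < 1) (n : ℕ) (t : ℝ) :
    HasDerivAt (fun t : ℝ => q ^ (t + n + 1)) (q ^ (t + n + 1) * Real.log q) t := by
  have h1 : HasDerivAt (fun s : ℝ => s + n + 1) 1 t :=
    ((hasDerivAt_id t).add_const (n : ℝ)).add_const 1
  have h2 := (Real.hasStrictDerivAt_const_rpow hq (t + n + 1)).hasDerivAt
  simpa [Function.comp_def] using h2.comp t h1

lemma hLt (hq : 0 < q) (hq1 : q < 1) {n : ℕ} {t : ℝ} (ht : t ∈ Set.Ioi (-(1/2) : ℝ)) :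
    q ^ (t + n + 1) ≤ q ^ ((1/2 : ℝ)) := by
  have hn : (0 : ℝ) ≤ n := Nat.cast_nonneg n
  have ht' : -(1/2 : ℝ) < t := ht
  exact Real.rpow_le_rpow_of_exponent_ge hq hq1.le (by linarith)

lemma hq12 (hq : 0 < q) (hq1 : q < 1) : q ^ ((1/2 : ℝ)) < 1 := Real.rpow_lt_one hq.le hq1 (by norm_num)

lemma hgg_hasDeriv (hq : 0 < q) (hq1 : q < 1) {n : ℕ} {t : ℝ} (ht : t ∈ Set.Ioi (-(1/2) : ℝ)) :
    HasDerivAt (gg q n) (gg1 q n t) t := by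
  have hlt : q ^ (t + n + 1) < 1 := lt_of_le_of_lt (hLt hq hq1 ht) (hq12 hq hq1)
  have hne : 1 - q ^ (t + (n : ℝ) + 1) ≠ 0 := by linarith
  have hv : HasDerivAt (fun t : ℝ => 1 - q ^ (t + n + 1))
      (-(q ^ (t + n + 1) * Real.log q)) t := by
    simpa [Pi.sub_def] using (hasDerivAt_const t (1 : ℝ)).sub (hderiv_rpow hq hq1 n t)
  have hlog := hv.log hne
  have := (hasDerivAt_const t (Real.log (1 - q ^ ((n : ℝ) + 1)))).sub hlog
  refine this.congr_deriv ?_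
  unfold gg1
  field_simp
  ring

lemma hgg1_hasDeriv (hq : 0 < q) (hq1 : q < 1) {n : ℕ} {t : ℝ} (ht : t ∈ Set.Ioi (-(1/2) : ℝ)) :
    HasDerivAt (gg1 q n) (gg2 q n t) t := by
  have hlt : q ^ (t + n + 1) < 1 := lt_of_le_of_lt (hLt hq hq1 ht) (hq12 hq hq1)
  have hne : 1 - q ^ (t + (n : ℝ) + 1) ≠ 0 := by linarith
  have hN : HasDerivAt (fun t : ℝ => Real.log q * q ^ (t + n + 1))
      (Real.log q * (q ^ (t + n + 1) * Real.log q)) t :=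
    (hderiv_rpow hq hq1 n t).const_mul _
  have hD : HasDerivAt (fun t : ℝ => 1 - q ^ (t + n + 1))
      (-(q ^ (t + n + 1) * Real.log q)) t := by
    simpa [Pi.sub_def] using (hasDerivAt_const t (1 : ℝ)).sub (hderiv_rpow hq hq1 n t)
  have := hN.div hD hne
  refine this.congr_deriv ?_
  unfold gg2
  field_simp
  ring

lemma hbound1 (hq : 0 < q) (hq1 : q < 1) {n : ℕ} {t : ℝ} (ht : t ∈ Set.Ioi (-(1/2) : ℝ)) :
    ‖gg1 q n t‖ ≤ |Real.log q| * (q ^ (-(1/2) : ℝ) * q ^ ((n : ℝ) + 1)) /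
      (1 - q ^ ((1/2 : ℝ))) := by
  have hqe : 0 < q ^ (t + (n : ℝ) + 1) := Real.rpow_pos_of_pos hq _
  have hlt : q ^ (t + n + 1) < 1 := lt_of_le_of_lt (hLt hq hq1 ht) (hq12 hq hq1)
  have hε : 0 < 1 - q ^ ((1/2 : ℝ)) := by linarith [hq12 hq hq1]
  have hden : 1 - q ^ ((1/2 : ℝ)) ≤ 1 - q ^ (t + (n : ℝ) + 1) := by
    linarith [hLt hq hq1 (n := n) ht]
  have hsplit : q ^ (t + (n : ℝ) + 1) ≤ q ^ (-(1/2) : ℝ) * q ^ ((n : ℝ) + 1) := by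
    have : t + (n : ℝ) + 1 = t + ((n : ℝ) + 1) := by ring
    rw [this, Real.rpow_add hq]
    have ht' : -(1/2 : ℝ) < t := ht
    have : q ^ t ≤ q ^ (-(1/2) : ℝ) :=
      Real.rpow_le_rpow_of_exponent_ge hq hq1.le ht'.le
    exact mul_le_mul_of_nonneg_right this (Real.rpow_pos_of_pos hq _).le
  have habs : ‖gg1 q n t‖ = |Real.log q| * q ^ (t + (n : ℝ) + 1) /
      (1 - q ^ (t + (n : ℝ) + 1)) := by
    unfold gg1
    rw [Real.norm_eq_abs, abs_div, abs_mul, abs_of_pos hqe,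
      abs_of_pos (show (0:ℝ) < 1 - q ^ (t + (n:ℝ) + 1) by linarith)]
  rw [habs]
  apply div_le_div₀ (by positivity) ?_ (by linarith) hden
  exact mul_le_mul_of_nonneg_left hsplit (abs_nonneg _)

lemma hbound2 (hq : 0 < q) (hq1 : q < 1) {n : ℕ} {t : ℝ} (ht : t ∈ Set.Ioi (-(1/2) : ℝ)) :
    ‖gg2 q n t‖ ≤ Real.log q ^ 2 * (q ^ (-(1/2) : ℝ) * q ^ ((n : ℝ) + 1)) /
      (1 - q ^ ((1/2 : ℝ))) ^ 2 := by
  have hqe : 0 < q ^ (t + (n : ℝ) + 1) := Real.rpow_pos_of_pos hq _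
  have hlt : q ^ (t + n + 1) < 1 := lt_of_le_of_lt (hLt hq hq1 ht) (hq12 hq hq1)
  have hε : 0 < 1 - q ^ ((1/2 : ℝ)) := by linarith [hq12 hq hq1]
  have hden : (1 - q ^ ((1/2 : ℝ))) ^ 2 ≤ (1 - q ^ (t + (n : ℝ) + 1)) ^ 2 := by
    have h1 : 1 - q ^ ((1/2 : ℝ)) ≤ 1 - q ^ (t + (n : ℝ) + 1) := by
      linarith [hLt hq hq1 (n := n) ht]
    exact pow_le_pow_left₀ hε.le h1 2
  have hsplit : q ^ (t + (n : ℝ) + 1) ≤ q ^ (-(1/2) : ℝ) * q ^ ((n : ℝ) + 1) := by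
    have : t + (n : ℝ) + 1 = t + ((n : ℝ) + 1) := by ring
    rw [this, Real.rpow_add hq]
    have ht' : -(1/2 : ℝ) < t := ht
    have : q ^ t ≤ q ^ (-(1/2) : ℝ) :=
      Real.rpow_le_rpow_of_exponent_ge hq hq1.le ht'.le
    exact mul_le_mul_of_nonneg_right this (Real.rpow_pos_of_pos hq _).le
  have habs : ‖gg2 q n t‖ = Real.log q ^ 2 * q ^ (t + (n : ℝ) + 1) /
      (1 - q ^ (t + (n : ℝ) + 1)) ^ 2 := by
    unfold gg2
    rw [Real.norm_eq_abs, abs_of_nonneg (by positivity)]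
  rw [habs]
  apply div_le_div₀ (by positivity) ?_ (by positivity) hden
  exact mul_le_mul_of_nonneg_left hsplit (sq_nonneg _)

lemma hu1_summable (hq : 0 < q) (hq1 : q < 1) : Summable (fun n : ℕ =>
    |Real.log q| * (q ^ (-(1/2) : ℝ) * q ^ ((n : ℝ) + 1)) / (1 - q ^ ((1/2 : ℝ)))) := by
  have := (sumgeo hq hq1).mul_left (|Real.log q| * q ^ (-(1/2) : ℝ) / (1 - q ^ ((1/2 : ℝ))))
  apply this.congr
  intro n
  ring

lemma hu2_summable (hq : 0 < q) (hq1 : q < 1) : Summable (fun n : ℕ =>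
    Real.log q ^ 2 * (q ^ (-(1/2) : ℝ) * q ^ ((n : ℝ) + 1)) / (1 - q ^ ((1/2 : ℝ))) ^ 2) := by
  have := (sumgeo hq hq1).mul_left
    (Real.log q ^ 2 * q ^ (-(1/2) : ℝ) / (1 - q ^ ((1/2 : ℝ))) ^ 2)
  apply this.congr
  intro n
  ring

lemma hgg_summable (hq : 0 < q) (hq1 : q < 1) {t : ℝ} (ht : t ∈ Set.Ioi (-(1/2) : ℝ)) :
    Summable (fun n : ℕ => gg q n t) := by
  have hε : 0 < 1 - q ^ ((1/2 : ℝ)) := by linarith [hq12 hq hq1]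
  apply Summable.of_norm_bounded
    (g := fun n : ℕ => (q ^ ((n : ℝ) + 1) + q ^ (-(1/2) : ℝ) * q ^ ((n : ℝ) + 1)) /
      (1 - q ^ ((1/2 : ℝ))))
  · have := ((sumgeo hq hq1).add ((sumgeo hq hq1).mul_left (q ^ (-(1/2) : ℝ)))).div_const
      (1 - q ^ ((1/2 : ℝ)))
    apply this.congr
    intro n
    simp [add_div]
  · intro n
    have hqe : 0 < q ^ (t + (n : ℝ) + 1) := Real.rpow_pos_of_pos hq _
    have hqn : 0 < q ^ ((n : ℝ) + 1) := Real.rpow_pos_of_pos hq _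
    have hlt : q ^ (t + n + 1) < 1 := lt_of_le_of_lt (hLt hq hq1 ht) (hq12 hq hq1)
    have hnlt : q ^ ((n : ℝ) + 1) ≤ q ^ ((1/2 : ℝ)) :=
      Real.rpow_le_rpow_of_exponent_ge hq hq1.le
        (by linarith [Nat.cast_nonneg (α := ℝ) n] : (1/2 : ℝ) ≤ (n : ℝ) + 1)
    have hden1 : 1 - q ^ ((1/2 : ℝ)) ≤ 1 - q ^ ((n : ℝ) + 1) := by linarith
    have hden2 : 1 - q ^ ((1/2 : ℝ)) ≤ 1 - q ^ (t + (n : ℝ) + 1) := by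
      linarith [hLt hq hq1 (n := n) ht]
    have h1 : -Real.log (1 - q ^ ((n : ℝ) + 1)) ≤ q ^ ((n : ℝ) + 1) / (1 - q ^ ((1/2 : ℝ))) :=
      neglog_le hqn hε hden1
    have h2 : -Real.log (1 - q ^ (t + (n : ℝ) + 1)) ≤
        q ^ (t + (n : ℝ) + 1) / (1 - q ^ ((1/2 : ℝ))) := neglog_le hqe hε hden2
    have hsplit : q ^ (t + (n : ℝ) + 1) ≤ q ^ (-(1/2) : ℝ) * q ^ ((n : ℝ) + 1) := by
      have he : t + (n : ℝ) + 1 = t + ((n : ℝ) + 1) := by ring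
      rw [he, Real.rpow_add hq]
      have ht' : -(1/2 : ℝ) < t := ht
      exact mul_le_mul_of_nonneg_right
        (Real.rpow_le_rpow_of_exponent_ge hq hq1.le ht'.le) hqn.le
    have hl1 : Real.log (1 - q ^ ((n : ℝ) + 1)) ≤ 0 :=
      Real.log_nonpos (by linarith) (by linarith)
    have hl2 : Real.log (1 - q ^ (t + (n : ℝ) + 1)) ≤ 0 :=
      Real.log_nonpos (by linarith) (by linarith)
    have habs : ‖gg q n t‖ ≤ -Real.log (1 - q ^ ((n : ℝ) + 1)) +
        -Real.log (1 - q ^ (t + (n : ℝ) + 1)) := by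
      unfold gg
      rw [Real.norm_eq_abs]
      rw [abs_sub_comm]
      calc |Real.log (1 - q ^ (t + (n : ℝ) + 1)) - Real.log (1 - q ^ ((n : ℝ) + 1))|
          ≤ |Real.log (1 - q ^ (t + (n : ℝ) + 1))| + |Real.log (1 - q ^ ((n : ℝ) + 1))| :=
            abs_sub _ _
        _ = -Real.log (1 - q ^ ((n : ℝ) + 1)) + -Real.log (1 - q ^ (t + (n : ℝ) + 1)) := by
            rw [abs_of_nonpos hl1, abs_of_nonpos hl2]; ring
    have hfin : q ^ (t + (n : ℝ) + 1) / (1 - q ^ ((1/2 : ℝ))) ≤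
        (q ^ (-(1/2) : ℝ) * q ^ ((n : ℝ) + 1)) / (1 - q ^ ((1/2 : ℝ))) := by gcongr
    calc ‖gg q n t‖ ≤ -Real.log (1 - q ^ ((n : ℝ) + 1)) +
          -Real.log (1 - q ^ (t + (n : ℝ) + 1)) := habs
      _ ≤ q ^ ((n : ℝ) + 1) / (1 - q ^ ((1/2 : ℝ))) +
          (q ^ (-(1/2) : ℝ) * q ^ ((n : ℝ) + 1)) / (1 - q ^ ((1/2 : ℝ))) := by
            have := le_trans h2 hfin; linarith
      _ = (q ^ ((n : ℝ) + 1) + q ^ (-(1/2) : ℝ) * q ^ ((n : ℝ) + 1)) /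
          (1 - q ^ ((1/2 : ℝ))) := by rw [add_div]

lemma hlog_eq (hq : 0 < q) (hq1 : q < 1) {t : ℝ} (ht : t ∈ Set.Ioi (-(1/2) : ℝ)) :
    Real.log (qGammaR q t) = -t * Real.log (1 - q) + ∑' n : ℕ, gg q n t := by
  have hq' : (0 : ℝ) < 1 - q := by linarith
  have hsum := hgg_summable hq hq1 ht
  have hP : HasProd (fun n : ℕ => (1 - q ^ ((n : ℝ) + 1)) / (1 - q ^ (t + n + 1)))
      (Real.exp (∑' n : ℕ, gg q n t)) := by
    have h0 := hsum.hasSum.rexp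
    have heq : (Real.exp ∘ fun n : ℕ => gg q n t) =
        fun n : ℕ => (1 - q ^ ((n : ℝ) + 1)) / (1 - q ^ (t + n + 1)) := by
      funext n
      have hlt : q ^ (t + n + 1) < 1 := lt_of_le_of_lt (hLt hq hq1 ht) (hq12 hq hq1)
      have hnlt : q ^ ((n : ℝ) + 1) < 1 :=
        Real.rpow_lt_one hq.le hq1 (by positivity)
      simp only [Function.comp, gg, Real.exp_sub,
        Real.exp_log (by linarith : (0:ℝ) < 1 - q ^ ((n : ℝ) + 1)),
        Real.exp_log (by linarith : (0:ℝ) < 1 - q ^ (t + (n : ℝ) + 1))]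
    rwa [heq] at h0
  have hprod : (∏' n : ℕ, (1 - q ^ ((n : ℝ) + 1)) / (1 - q ^ (t + n + 1))) =
      Real.exp (∑' n : ℕ, gg q n t) := hP.tprod_eq
  unfold qGammaR
  rw [hprod, Real.log_mul (by positivity) (Real.exp_ne_zero _), Real.log_exp,
    Real.log_rpow hq']

lemma keyA (hq : 0 < q) (hq1 : q < 1) {t : ℝ} (ht : t ∈ Set.Ioi (-(1/2) : ℝ)) :
    HasDerivAt (fun z : ℝ => ∑' n : ℕ, gg q n z) (∑' n : ℕ, gg1 q n t) t := by
  apply hasDerivAt_tsum_of_isPreconnected (hu1_summable hq hq1) isOpen_Ioi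
    (isPreconnected_Ioi) (fun n y hy => hgg_hasDeriv hq hq1 hy)
    (fun n y hy => hbound1 hq hq1 hy) (by norm_num : (0:ℝ) ∈ Set.Ioi (-(1/2) : ℝ)) ?_ ht
  have : (fun n : ℕ => gg q n 0) = fun _ : ℕ => (0:ℝ) := by
    funext n; simp [gg]
  rw [this]
  exact summable_zero

lemma keyB (hq : 0 < q) (hq1 : q < 1) {t : ℝ} (ht : t ∈ Set.Ioi (-(1/2) : ℝ)) :
    HasDerivAt (fun z : ℝ => ∑' n : ℕ, gg1 q n z) (∑' n : ℕ, gg2 q n t) t := by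
  apply hasDerivAt_tsum_of_isPreconnected (hu2_summable hq hq1) isOpen_Ioi
    (isPreconnected_Ioi) (fun n y hy => hgg1_hasDeriv hq hq1 hy)
    (fun n y hy => hbound2 hq hq1 hy) (by norm_num : (0:ℝ) ∈ Set.Ioi (-(1/2) : ℝ)) ?_ ht
  exact Summable.of_norm_bounded (hu1_summable hq hq1)
    (fun n => hbound1 hq hq1 (by norm_num : (0:ℝ) ∈ Set.Ioi (-(1/2) : ℝ)))

end aux

theorem stmt13 (q : ℝ) (hq : 0 < q) (hq1 : q < 1) (x : ℝ) (hx : 0 ≤ x) :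
    0 ≤ iteratedDeriv 2 (fun t : ℝ => Real.log (qGammaR q t)) x := by
  have hx' : x ∈ Set.Ioi (-(1/2) : ℝ) := by simp; linarith
  have hmem : Set.Ioi (-(1/2) : ℝ) ∈ 𝓝 x := Ioi_mem_nhds (by linarith)
  set h : ℝ → ℝ := fun t => -t * Real.log (1 - q) + ∑' n : ℕ, gg q n t with hh
  have heq : (fun t : ℝ => Real.log (qGammaR q t)) =ᶠ[𝓝 x] h :=
    eventually_of_mem hmem (fun t ht => hlog_eq hq hq1 ht)
  have hd1 : deriv h =ᶠ[𝓝 x] fun t => -Real.log (1 - q) + ∑' n : ℕ, gg1 q n t := by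
    apply eventually_of_mem hmem
    intro t ht
    have hA : HasDerivAt h (-Real.log (1 - q) + ∑' n : ℕ, gg1 q n t) t := by
      have h1 : HasDerivAt (fun t : ℝ => -t * Real.log (1 - q)) (-Real.log (1 - q)) t := by
        simpa using ((hasDerivAt_id t).neg.mul_const (Real.log (1 - q)))
      exact h1.add (keyA hq hq1 ht)
    exact hA.deriv
  have h2 : iteratedDeriv 2 (fun t : ℝ => Real.log (qGammaR q t)) x =
      deriv (deriv (fun t : ℝ => Real.log (qGammaR q t))) x := by
    rw [show (2:ℕ) = 1 + 1 from rfl, iteratedDeriv_succ, iteratedDeriv_one]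
  rw [h2]
  have h3 : deriv (deriv (fun t : ℝ => Real.log (qGammaR q t))) x = deriv (deriv h) x :=
    heq.deriv.deriv_eq
  rw [h3, hd1.deriv_eq]
  have h4 : HasDerivAt (fun t : ℝ => -Real.log (1 - q) + ∑' n : ℕ, gg1 q n t)
      (0 + ∑' n : ℕ, gg2 q n x) x :=
    (hasDerivAt_const x _).add (keyB hq hq1 hx')
  rw [h4.deriv, zero_add]
  apply tsum_nonneg
  intro n
  unfold gg2
  have hqe : 0 < q ^ (x + (n : ℝ) + 1) := Real.rpow_pos_of_pos hq _
  positivity
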